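/- If f ∈ Ω, then |z f'(z)/f(z) - 1| ≤ r/(2-r) for all z with |z| = r < 1, z ≠ 0. -/

import Mathlib

open Metric Complex Set

theorem stmt_3 (f : ℂ → ℂ)
    (hf : DifferentiableOn ℂ f (ball (0:ℂ) 1))
    (hf0 : f 0 = 0) (hf1 : deriv f 0 = 1)
    (hΩ : ∀ z ∈ ball (0:ℂ) 1, ‖z * deriv f z - f z‖ < 1/2) :
    ∀ z ∈ ball (0:ℂ) 1, z ≠ 0 →
      ‖z * deriv f z / f z - 1‖ ≤ ‖z‖ / (2 - ‖z‖) := by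
  have h01 : (0:ℂ) ∈ ball (0:ℂ) 1 := mem_ball_self one_pos
  set g : ℂ → ℂ := fun z => z * deriv f z - f z with hg_def
  have hfa : AnalyticOnNhd ℂ f (ball 0 1) := hf.analyticOnNhd isOpen_ball
  have hf'a : AnalyticOnNhd ℂ (deriv f) (ball 0 1) := hfa.deriv
  have hga : AnalyticOnNhd ℂ g (ball 0 1) := (analyticOnNhd_id.mul hf'a).sub hfa
  have hgd : DifferentiableOn ℂ g (ball 0 1) := hga.differentiableOn
  have hg0 : g 0 = 0 := by simp [hg_def, hf0]
  have hdg : HasDerivAt g (1 * deriv f 0 + 0 * deriv (deriv f) 0 - deriv f 0) 0 := by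
    exact ((hasDerivAt_id 0).mul (hf'a 0 h01).differentiableAt.hasDerivAt).sub
      (hfa 0 h01).differentiableAt.hasDerivAt
  have hg'0 : deriv g 0 = 0 := by rw [hdg.deriv]; ring
  set u : ℂ → ℂ := dslope g 0 with hu_def
  have hud : DifferentiableOn ℂ u (ball 0 1) :=
    (differentiableOn_dslope (isOpen_ball.mem_nhds h01)).mpr hgd
  have hu0 : u 0 = 0 := by rw [hu_def, dslope_same, hg'0]
  have hmaps : MapsTo g (ball 0 1) (ball (g 0) (1/2)) := by
    intro w hw
    rw [hg0, mem_ball_zero_iff]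
    exact hΩ w hw
  have hu_le : ∀ w ∈ ball (0:ℂ) 1, ‖u w‖ ≤ 1/2 := fun w hw => by
    simpa using Complex.norm_dslope_le_div_of_mapsTo_ball hgd (hmaps.mono_right ball_subset_closedBall) hw
  have hu_lt : ∀ w ∈ ball (0:ℂ) 1, ‖u w‖ < 1/2 := by
    intro w hw
    rcases lt_or_eq_of_le (hu_le w hw) with h | h
    · exact h
    exfalso
    have heq : Set.EqOn g (fun z => g 0 + (z - 0) • u w) (ball 0 1) :=
      Complex.affine_of_mapsTo_ball_of_exists_norm_dslope_eq_div hgd (hmaps.mono_right ball_subset_closedBall) hw (by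
        rw [← hu_def, h]; norm_num)
    have hev : g =ᶠ[nhds (0:ℂ)] fun z => g 0 + (z - 0) • u w :=
      Filter.eventuallyEq_of_mem (isOpen_ball.mem_nhds h01) heq
    have hder : HasDerivAt (fun z : ℂ => g 0 + (z - 0) • u w) (u w) 0 := by
      simpa using (((hasDerivAt_id (0:ℂ)).sub_const 0).smul_const (u w)).const_add (g 0)
    have : deriv g 0 = u w := by rw [hev.deriv_eq, hder.deriv]
    rw [hg'0] at this
    rw [← this, norm_zero] at h
    norm_num at h
  have humaps : MapsTo u (ball 0 1) (ball (u 0) (1/2)) := fun w hw => by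
    rw [hu0, mem_ball_zero_iff]; exact hu_lt w hw
  have hg_bound : ∀ w ∈ ball (0:ℂ) 1, ‖g w‖ ≤ ‖w‖^2 / 2 := by
    intro w hw
    rcases eq_or_ne w 0 with rfl | hne
    · simp [hg0]
    have h1 : ‖dslope u 0 w‖ ≤ 1/2 := by
      simpa using Complex.norm_dslope_le_div_of_mapsTo_ball hud (humaps.mono_right ball_subset_closedBall) hw
    have huw : u w = g w / w := by
      rw [hu_def, dslope_of_ne _ hne, slope_def_field, hg0, sub_zero, sub_zero]
    rw [dslope_of_ne _ hne, slope_def_field, hu0, sub_zero, sub_zero, huw,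
      div_div, norm_div, norm_mul] at h1
    have hw0 : (0:ℝ) < ‖w‖ := norm_pos_iff.mpr hne
    rw [div_le_iff₀ (by positivity)] at h1
    calc ‖g w‖ ≤ 1/2 * (‖w‖ * ‖w‖) := h1
    _ = ‖w‖^2 / 2 := by ring
  -- the function p = f z / z
  set p : ℂ → ℂ := dslope f 0 with hp_def
  have hpd : DifferentiableOn ℂ p (ball 0 1) :=
    (differentiableOn_dslope (isOpen_ball.mem_nhds h01)).mpr hf
  have hpa : AnalyticOnNhd ℂ p (ball 0 1) := hpd.analyticOnNhd isOpen_ball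
  have hp0 : p 0 = 1 := by rw [hp_def, dslope_same, hf1]
  have hderiv_ne : ∀ w ∈ ball (0:ℂ) 1, w ≠ 0 → ‖deriv p w‖ ≤ 1/2 := by
    intro w hw hne
    have hevp : p =ᶠ[nhds w] fun x => f x / x := by
      filter_upwards [isOpen_compl_singleton.mem_nhds hne] with x hx
      rw [hp_def, dslope_of_ne _ hx, slope_def_field, hf0, sub_zero, sub_zero]
    have hfd : HasDerivAt f (deriv f w) w :=
      (hfa w hw).differentiableAt.hasDerivAt
    have hdd : HasDerivAt (fun x => f x / x) ((deriv f w * w - f w * 1) / w ^ 2) w :=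
      hfd.div (hasDerivAt_id w) hne
    have : deriv p w = (deriv f w * w - f w * 1) / w ^ 2 := by
      rw [hevp.deriv_eq, hdd.deriv]
    rw [this]
    have : deriv f w * w - f w * 1 = g w := by rw [hg_def]; ring
    rw [this, norm_div]
    have hw0 : (0:ℝ) < ‖w‖ := norm_pos_iff.mpr hne
    rw [div_le_iff₀ (by simp; positivity)]
    have := hg_bound w hw
    calc ‖g w‖ ≤ ‖w‖^2/2 := this
    _ = 1/2 * ‖w ^ 2‖ := by rw [norm_pow]; ring
  have hderiv_le : ∀ w ∈ ball (0:ℂ) 1, ‖deriv p w‖ ≤ 1/2 := by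
    intro w hw
    rcases eq_or_ne w 0 with rfl | hne
    · have hcont : ContinuousAt (deriv p) 0 :=
        ((hpa.deriv 0 h01).differentiableAt).continuousAt
      have htend : Filter.Tendsto (fun x => ‖deriv p x‖) (nhdsWithin (0:ℂ) {(0:ℂ)}ᶜ)
          (nhds ‖deriv p 0‖) :=
        (hcont.norm.continuousWithinAt).tendsto
      refine le_of_tendsto htend ?_
      filter_upwards [self_mem_nhdsWithin,
        mem_nhdsWithin_of_mem_nhds (isOpen_ball.mem_nhds h01)] with x hx hxb
      exact hderiv_ne x hxb hx
    · exact hderiv_ne w hw hne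
  have key : ∀ z ∈ ball (0:ℂ) 1, ‖p z - p 0‖ ≤ 1/2 * ‖z - 0‖ := by
    intro z hz
    refine (convex_ball (0:ℂ) 1).norm_image_sub_le_of_norm_hasFDerivWithin_le
      (f' := fun x => ContinuousLinearMap.smulRight (1 : ℂ →L[ℂ] ℂ) (deriv p x))
      (fun x hx => ?_) (fun x hx => ?_) h01 hz
    · exact ((hpd.differentiableAt (isOpen_ball.mem_nhds hx)).hasDerivAt).hasFDerivAt.hasFDerivWithinAt
    · rw [ContinuousLinearMap.norm_smulRight_apply, norm_one, one_mul]
      exact hderiv_le x hx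
  intro z hz hzne
  have hpz : p z = f z / z := by
    rw [hp_def, dslope_of_ne _ hzne, slope_def_field, hf0, sub_zero, sub_zero]
  have hz1 : ‖z‖ < 1 := mem_ball_zero_iff.mp hz
  have hz0 : (0:ℝ) < ‖z‖ := norm_pos_iff.mpr hzne
  have h2z : (0:ℝ) < 2 - ‖z‖ := by linarith
  have hk := key z hz
  rw [hp0, sub_zero] at hk
  have hplb : (1:ℝ) - ‖z‖/2 ≤ ‖p z‖ := by
    have h1 : ‖(1:ℂ)‖ - ‖p z‖ ≤ ‖(1:ℂ) - p z‖ := norm_sub_norm_le 1 (p z)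
    rw [norm_sub_rev, norm_one] at h1
    linarith
  have hfz_eq : f z = z * p z := by rw [hpz]; field_simp
  have hfz_lb : ‖z‖ * (2 - ‖z‖) / 2 ≤ ‖f z‖ := by
    rw [hfz_eq, norm_mul]
    have : ‖z‖ * (2 - ‖z‖) / 2 = ‖z‖ * (1 - ‖z‖/2) := by ring
    rw [this]
    exact mul_le_mul_of_nonneg_left hplb hz0.le
  have hfz0 : f z ≠ 0 := by
    intro hcon
    rw [hcon, norm_zero] at hfz_lb
    nlinarith
  have hrw : z * deriv f z / f z - 1 = g z / f z := by
    rw [hg_def, sub_div, div_self hfz0]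
  rw [hrw, norm_div, div_le_div_iff₀ (norm_pos_iff.mpr hfz0) h2z]
  have hgb := hg_bound z hz
  nlinarith [norm_nonneg (g z), norm_nonneg (f z)]
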